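/- Converse Savage representation: let φ : [0,1] → ℝ be bounded, strictly convex, and differentiable on (0,1), and let s : {0,1} × [0,1] → [0,∞] be continuous with s(i,x) = -φ(x) - φ'(x)·(i - x) for all x ∈ (0,1), i ∈ {0,1}. Then s is a proper scoring rule: for every p ∈ [0,1], the expected score p·s(1,x) + (1-p)·s(0,x) is uniquely minimized over x ∈ [0,1] at x = p. -/

import Mathlib

open Set Filter Topology

/-- Converse Savage representation: if `φ` is bounded, strictly convex on
`[0,1]` and differentiable on `(0,1)`, and the continuous scoring rule `s`
satisfies `s(i,x) = -φ(x) - φ'(x)·(i-x)` on `(0,1)`, then `s` is proper. -/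
theorem stmt_9 (φ φ' : ℝ → ℝ) (s : Fin 2 → ℝ → ENNReal)
    (hbdd : ∃ M : ℝ, ∀ x ∈ Icc (0:ℝ) 1, |φ x| ≤ M)
    (hconv : StrictConvexOn ℝ (Icc (0:ℝ) 1) φ)
    (hderiv : ∀ x ∈ Ioo (0:ℝ) 1, HasDerivAt φ (φ' x) x)
    (hcont : ∀ i : Fin 2, ContinuousOn (s i) (Icc (0:ℝ) 1))
    (hfin : ∀ i : Fin 2, ∀ x ∈ Ioo (0:ℝ) 1, s i x ≠ ⊤)
    (hsav : ∀ x ∈ Ioo (0:ℝ) 1, ∀ i : Fin 2,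
      (s i x).toReal = -φ x - φ' x * ((i : ℝ) - x)) :
    ∀ p ∈ Icc (0:ℝ) 1, ∀ x ∈ Icc (0:ℝ) 1, x ≠ p →
      ENNReal.ofReal p * s 1 p + ENNReal.ofReal (1 - p) * s 0 p <
      ENNReal.ofReal p * s 1 x + ENNReal.ofReal (1 - p) * s 0 x := by
  -- tangent line of φ at an interior point lies strictly below φ
  have htang : ∀ t ∈ Ioo (0:ℝ) 1, ∀ z ∈ Icc (0:ℝ) 1, t ≠ z →
      φ t + φ' t * (z - t) < φ z := by
    intro t ht z hz htz
    have htI : t ∈ Icc (0:ℝ) 1 := Ioo_subset_Icc_self ht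
    rcases lt_or_gt_of_ne htz with h | h
    · have hs := hconv.lt_slope_of_hasDerivAt htI hz h (hderiv t ht)
      rw [slope_def_field] at hs
      have h' : (0:ℝ) < z - t := by linarith
      have h2 := (lt_div_iff₀ h').mp hs
      linarith
    · have hs := hconv.slope_lt_of_hasDerivAt hz htI h (hderiv t ht)
      rw [slope_def_field] at hs
      have h' : (0:ℝ) < t - z := by linarith
      have h2 := (div_lt_iff₀ h').mp hs
      nlinarith
  -- φ' is strictly monotone on the interior
  have hmono : ∀ a ∈ Ioo (0:ℝ) 1, ∀ b ∈ Ioo (0:ℝ) 1, a < b → φ' a < φ' b := by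
    intro a ha b hb hab
    have h1 := htang a ha b (Ioo_subset_Icc_self hb) hab.ne
    have h2 := htang b hb a (Ioo_subset_Icc_self ha) hab.ne'
    nlinarith
  intro p hp x hx hxp
  set G : ℝ → ℝ := fun t => -φ t - φ' t * (p - t) with hG
  -- moving away from p strictly increases G
  have hstep : ∀ a ∈ Ioo (0:ℝ) 1, ∀ b ∈ Ioo (0:ℝ) 1, a ≠ b →
      ((a ≤ b ∧ b ≤ p) ∨ (p ≤ b ∧ b ≤ a)) → G b < G a := by
    intro a ha b hb hab hbet
    have h1 : φ a + φ' a * (b - a) < φ b := htang a ha b (Ioo_subset_Icc_self hb) hab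
    have h2 : φ' a * (p - b) ≤ φ' b * (p - b) := by
      rcases hbet with ⟨h3, h4⟩ | ⟨h3, h4⟩
      · nlinarith [hmono a ha b hb (h3.lt_of_ne hab)]
      · nlinarith [hmono b hb a ha (h4.lt_of_ne (Ne.symm hab))]
    simp only [hG]
    nlinarith
  -- representation of the expected score at interior points
  have hE : ∀ t ∈ Ioo (0:ℝ) 1,
      ENNReal.ofReal p * s 1 t + ENNReal.ofReal (1-p) * s 0 t = ENNReal.ofReal (G t)
      ∧ 0 ≤ G t := by
    intro t ht
    have h1 := hsav t ht 1
    have h0 := hsav t ht 0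
    norm_num at h1 h0
    have hA : (0:ℝ) ≤ (s 1 t).toReal := ENNReal.toReal_nonneg
    have hB : (0:ℝ) ≤ (s 0 t).toReal := ENNReal.toReal_nonneg
    have hp1 : (0:ℝ) ≤ 1 - p := by linarith [hp.2]
    have hsum : p * (s 1 t).toReal + (1 - p) * (s 0 t).toReal = G t := by
      rw [h1, h0]; simp only [hG]; ring
    have hGnn : 0 ≤ G t := by
      rw [← hsum]
      have := mul_nonneg hp.1 hA
      have := mul_nonneg hp1 hB
      linarith
    refine ⟨?_, hGnn⟩
    rw [← ENNReal.ofReal_toReal (hfin 1 t ht), ← ENNReal.ofReal_toReal (hfin 0 t ht),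
      ← ENNReal.ofReal_mul hp.1, ← ENNReal.ofReal_mul hp1,
      ← ENNReal.ofReal_add (mul_nonneg hp.1 hA) (mul_nonneg hp1 hB), hsum]
  -- continuity of the expected score within [0,1]
  have hlim : ∀ e ∈ Icc (0:ℝ) 1,
      Tendsto (fun t => ENNReal.ofReal p * s 1 t + ENNReal.ofReal (1-p) * s 0 t)
        (𝓝[Ioo (0:ℝ) 1] e)
        (𝓝 (ENNReal.ofReal p * s 1 e + ENNReal.ofReal (1-p) * s 0 e)) := by
    intro e he
    have h1 : Tendsto (s 1) (𝓝[Ioo (0:ℝ) 1] e) (𝓝 (s 1 e)) :=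
      (hcont 1 e he).mono_left (nhdsWithin_mono e Ioo_subset_Icc_self)
    have h0 : Tendsto (s 0) (𝓝[Ioo (0:ℝ) 1] e) (𝓝 (s 0 e)) :=
      (hcont 0 e he).mono_left (nhdsWithin_mono e Ioo_subset_Icc_self)
    exact (ENNReal.Tendsto.const_mul h1 (Or.inr ENNReal.ofReal_ne_top)).add
      (ENNReal.Tendsto.const_mul h0 (Or.inr ENNReal.ofReal_ne_top))
  have hneBot : ∀ e ∈ Icc (0:ℝ) 1, (𝓝[Ioo (0:ℝ) 1] e).NeBot := by
    intro e he
    apply mem_closure_iff_nhdsWithin_neBot.mp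
    rwa [closure_Ioo (by norm_num : (0:ℝ) ≠ 1)]
  -- the midpoints
  set y : ℝ := (x + p) / 2 with hy
  set y' : ℝ := (y + p) / 2 with hy'
  have hxI := hx.1; have hxS := hx.2; have hpI := hp.1; have hpS := hp.2
  have hyI : y ∈ Ioo (0:ℝ) 1 := by
    constructor
    · rcases lt_or_gt_of_ne hxp with h | h
      · simp only [hy]; nlinarith
      · simp only [hy]; nlinarith
    · rcases lt_or_gt_of_ne hxp with h | h
      · simp only [hy]; nlinarith
      · simp only [hy]; nlinarith
  have hynp : y ≠ p := by
    rcases lt_or_gt_of_ne hxp with h | h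
    · simp only [hy]; intro hc; nlinarith [hc]
    · simp only [hy]; intro hc; nlinarith [hc]
  have hy'I : y' ∈ Ioo (0:ℝ) 1 := by
    constructor
    · rcases lt_or_gt_of_ne hynp with h | h
      · simp only [hy']; nlinarith [hyI.1]
      · simp only [hy']; nlinarith [hyI.1]
    · rcases lt_or_gt_of_ne hynp with h | h
      · simp only [hy']; nlinarith [hyI.2]
      · simp only [hy']; nlinarith [hyI.2]
  -- Part 2 : ofReal (G y) ≤ expected score at x
  have part2 : ENNReal.ofReal (G y) ≤
      ENNReal.ofReal p * s 1 x + ENNReal.ofReal (1-p) * s 0 x := by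
    rcases eq_or_lt_of_le hxI with h0 | hx0
    · -- x = 0, p > 0
      have hp0 : 0 < p := hpI.lt_of_ne fun h => hxp (by rw [← h0, ← h])
      have hev : ∀ᶠ t in 𝓝[Ioo (0:ℝ) 1] x, ENNReal.ofReal (G y) ≤
          ENNReal.ofReal p * s 1 t + ENNReal.ofReal (1-p) * s 0 t := by
        have hmem : ∀ᶠ t in 𝓝[Ioo (0:ℝ) 1] x, t ∈ Ioo (0:ℝ) 1 := eventually_mem_nhdsWithin
        have hlt : ∀ᶠ t in 𝓝[Ioo (0:ℝ) 1] x, t < y := by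
          apply Filter.Eventually.filter_mono nhdsWithin_le_nhds
          apply Filter.Tendsto.eventually_lt_const _ tendsto_id
          have := hyI.1; linarith
        filter_upwards [hmem, hlt] with t htI hty
        have hGle : G y ≤ G t := by
          refine le_of_lt (hstep t htI y hyI hty.ne (Or.inl ⟨hty.le, ?_⟩))
          rw [hy]; linarith
        calc ENNReal.ofReal (G y) ≤ ENNReal.ofReal (G t) := ENNReal.ofReal_le_ofReal hGle
          _ = _ := ((hE t htI).1).symm
      haveI := hneBot x hx
      exact ge_of_tendsto (hlim x hx) hev
    · rcases eq_or_lt_of_le hxS with h1 | hx1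
      · -- x = 1, p < 1
        have hp1 : p < 1 := lt_of_le_of_ne hpS fun h => hxp (by rw [h1, h])
        have hev : ∀ᶠ t in 𝓝[Ioo (0:ℝ) 1] x, ENNReal.ofReal (G y) ≤
            ENNReal.ofReal p * s 1 t + ENNReal.ofReal (1-p) * s 0 t := by
          have hmem : ∀ᶠ t in 𝓝[Ioo (0:ℝ) 1] x, t ∈ Ioo (0:ℝ) 1 := eventually_mem_nhdsWithin
          have hlt : ∀ᶠ t in 𝓝[Ioo (0:ℝ) 1] x, y < t := by
            apply Filter.Eventually.filter_mono nhdsWithin_le_nhds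
            apply Filter.Tendsto.eventually_const_lt _ tendsto_id
            have := hyI.2; linarith
          filter_upwards [hmem, hlt] with t htI hty
          have hGle : G y ≤ G t := by
            refine le_of_lt (hstep t htI y hyI hty.ne' (Or.inr ⟨?_, hty.le⟩))
            rw [hy]; linarith
          calc ENNReal.ofReal (G y) ≤ ENNReal.ofReal (G t) := ENNReal.ofReal_le_ofReal hGle
            _ = _ := ((hE t htI).1).symm
        haveI := hneBot x hx
        exact ge_of_tendsto (hlim x hx) hev
      · -- x interior
        have hxInt : x ∈ Ioo (0:ℝ) 1 := ⟨hx0, hx1⟩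
        have hGle : G y ≤ G x := by
          refine le_of_lt (hstep x hxInt y hyI ?_ ?_)
          · rw [hy]; rcases lt_or_gt_of_ne hxp with h | h <;> (intro hc; nlinarith)
          · rcases lt_or_gt_of_ne hxp with h | h
            · left; rw [hy]; constructor <;> linarith
            · right; rw [hy]; constructor <;> linarith
        rw [(hE x hxInt).1]
        exact ENNReal.ofReal_le_ofReal hGle
  -- Part 1 : expected score at p < ofReal (G y)
  have part1 : ENNReal.ofReal p * s 1 p + ENNReal.ofReal (1-p) * s 0 p
      < ENNReal.ofReal (G y) := by
    rcases eq_or_lt_of_le hpI with h0 | hp0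
    · -- p = 0
      have hle : ENNReal.ofReal p * s 1 p + ENNReal.ofReal (1-p) * s 0 p ≤
          ENNReal.ofReal (G y') := by
        have hev : ∀ᶠ t in 𝓝[Ioo (0:ℝ) 1] p,
            ENNReal.ofReal p * s 1 t + ENNReal.ofReal (1-p) * s 0 t ≤
            ENNReal.ofReal (G y') := by
          have hmem : ∀ᶠ t in 𝓝[Ioo (0:ℝ) 1] p, t ∈ Ioo (0:ℝ) 1 := eventually_mem_nhdsWithin
          have hlt : ∀ᶠ t in 𝓝[Ioo (0:ℝ) 1] p, t < y' := by
            apply Filter.Eventually.filter_mono nhdsWithin_le_nhds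
            apply Filter.Tendsto.eventually_lt_const _ tendsto_id
            have := hy'I.1; linarith
          filter_upwards [hmem, hlt] with t htI hty
          rw [(hE t htI).1]
          refine ENNReal.ofReal_le_ofReal (le_of_lt (hstep y' hy'I t htI hty.ne' ?_))
          exact Or.inr ⟨by linarith [htI.1], hty.le⟩
        haveI := hneBot p hp
        exact le_of_tendsto (hlim p hp) hev
      refine lt_of_le_of_lt hle ?_
      rw [ENNReal.ofReal_lt_ofReal_iff_of_nonneg (hE y' hy'I).2]
      have hy0 := hyI.1
      refine hstep y hyI y' hy'I ?_ (Or.inr ⟨by rw [hy']; linarith, by rw [hy']; linarith⟩)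
      rw [hy']; intro hc; nlinarith
    · rcases eq_or_lt_of_le hpS with h1 | hp1
      · -- p = 1
        have hle : ENNReal.ofReal p * s 1 p + ENNReal.ofReal (1-p) * s 0 p ≤
            ENNReal.ofReal (G y') := by
          have hev : ∀ᶠ t in 𝓝[Ioo (0:ℝ) 1] p,
              ENNReal.ofReal p * s 1 t + ENNReal.ofReal (1-p) * s 0 t ≤
              ENNReal.ofReal (G y') := by
            have hmem : ∀ᶠ t in 𝓝[Ioo (0:ℝ) 1] p, t ∈ Ioo (0:ℝ) 1 := eventually_mem_nhdsWithin
            have hlt : ∀ᶠ t in 𝓝[Ioo (0:ℝ) 1] p, y' < t := by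
              apply Filter.Eventually.filter_mono nhdsWithin_le_nhds
              apply Filter.Tendsto.eventually_const_lt _ tendsto_id
              have := hy'I.2; linarith
            filter_upwards [hmem, hlt] with t htI hty
            rw [(hE t htI).1]
            refine ENNReal.ofReal_le_ofReal (le_of_lt (hstep y' hy'I t htI hty.ne ?_))
            exact Or.inl ⟨hty.le, by linarith [htI.2]⟩
          haveI := hneBot p hp
          exact le_of_tendsto (hlim p hp) hev
        refine lt_of_le_of_lt hle ?_
        rw [ENNReal.ofReal_lt_ofReal_iff_of_nonneg (hE y' hy'I).2]
        have hy1 := hyI.2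
        refine hstep y hyI y' hy'I ?_ (Or.inl ⟨by rw [hy']; linarith, by rw [hy']; linarith⟩)
        rw [hy']; intro hc; nlinarith
      · -- p interior
        have hpInt : p ∈ Ioo (0:ℝ) 1 := ⟨hp0, hp1⟩
        rw [(hE p hpInt).1,
          ENNReal.ofReal_lt_ofReal_iff_of_nonneg (hE p hpInt).2]
        refine hstep y hyI p hpInt hynp ?_
        rcases le_total y p with h | h
        · exact Or.inl ⟨h, le_refl p⟩
        · exact Or.inr ⟨le_refl p, h⟩
  exact lt_of_lt_of_le part1 part2
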